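/- Let G be a finite undirected graph with vertex set V and edge set E (possibly including loops), with a weight α_e > 0 assigned to each edge e ∈ E, and let x0 ∈ V. Define the process law p on finite strings over V starting at x0 by p(empty string) = 1 and, recursively, p(x,i,j) = p(x,i) · (α_{(i,j)} + T_{i,j}(x0,x,i) + T_{j,i}(x0,x,i)) / (α_{(i,·)} + T_{i,·}(x0,x,i) + T_{·,i}(x0,x,i)) if {i,j} ∈ E, and p(x,i,j) = 0 otherwise, where α_{(i,·)} = ∑_k α_{(i,k)} is the sum of the weights of the edges incident to i, T_{i,·}(z) = ∑_{j'} T_{i,j'}(z) and T_{·,i}(z) = ∑_{j'} T_{j',i}(z). Then p (the law of the edge reinforced random walk on G) is Markov exchangeable. -/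

import Mathlib

/-!
STATEMENT 17: the process law of an edge reinforced random walk on a finite
undirected graph (possibly with loops) is Markov exchangeable.
-/

open scoped Classical

variable {V : Type*} [Fintype V] [DecidableEq V]

/-- The number of transitions from `i` to `j` in the finite string `z`. -/
def transCount (z : List V) (i j : V) : ℕ :=
  (z.zip z.tail).countP (fun q => decide (q = (i, j)))

/-- The number of transitions from `i` in the finite string `z`. -/
def transFrom (z : List V) (i : V) : ℕ :=
  (z.zip z.tail).countP (fun q => decide (q.1 = i))

/-- The number of transitions into `i` in the finite string `z`. -/
def transTo (z : List V) (i : V) : ℕ :=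
  (z.zip z.tail).countP (fun q => decide (q.2 = i))

/-- Two finite strings are equivalent if they have the same first element and the
same transition counts between any two states. -/
def StringEquiv (z z' : List V) : Prop :=
  z.head? = z'.head? ∧ ∀ i j : V, transCount z i j = transCount z' i j

/-- One-step predictive probability of the edge reinforced random walk: the past
path is `z` (starting at `x0`, ending at the current state), the next state is `y`. -/
noncomputable def errwStep (E : Set (Sym2 V)) (α : Sym2 V → ℝ) (z : List V) (y : V) : ℝ :=
  match z.getLast? with
  | none => 0
  | some i =>
    if s(i, y) ∈ E then
      (α s(i, y) + (transCount z i y : ℝ) + (transCount z y i : ℝ)) /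
        ((∑ m : V, if s(i, m) ∈ E then α s(i, m) else 0) +
          (transFrom z i : ℝ) + (transTo z i : ℝ))
    else 0

/-- The probability of appending the string `x` to the past path `z`. -/
noncomputable def lawFrom (step : List V → V → ℝ) : List V → List V → ℝ
  | _, [] => 1
  | z, y :: rest => step z y * lawFrom step (z ++ [y]) rest

/-- The process law of the edge reinforced random walk started at `x0`:
`errwLaw E α x0 (x1, …, xn) = P(X_1 = x1, …, X_n = xn)`. -/
noncomputable def errwLaw (E : Set (Sym2 V)) (α : Sym2 V → ℝ) (x0 : V) (x : List V) : ℝ :=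
  lawFrom (errwStep E α) [x0] x

/-! ### Auxiliary combinatorial lemmas -/

lemma zip_tail_cons_cons (a b : V) (t : List V) :
    (a :: b :: t).zip (a :: b :: t).tail = (a, b) :: (b :: t).zip (b :: t).tail := by
  simp

lemma zip_tail_append {z : List V} {i : V} (hz : z.getLast? = some i) (y : V) :
    (z ++ [y]).zip (z ++ [y]).tail = z.zip z.tail ++ [(i, y)] := by
  induction z with
  | nil => simp at hz
  | cons a t ih =>
    cases t with
    | nil =>
      simp only [List.getLast?_singleton, Option.some.injEq] at hz
      subst hz; simp
    | cons b t' =>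
      have h' : (b :: t').getLast? = some i := by
        rwa [List.getLast?_cons_cons] at hz
      have key := ih h'
      have e1 : (a :: b :: t') ++ [y] = a :: b :: (t' ++ [y]) := rfl
      rw [e1, zip_tail_cons_cons, zip_tail_cons_cons,
        show b :: (t' ++ [y]) = (b :: t') ++ [y] from rfl, key]
      simp

lemma transCount_append {z : List V} {i : V} (hz : z.getLast? = some i) (y a b : V) :
    transCount (z ++ [y]) a b = transCount z a b + if (i, y) = (a, b) then 1 else 0 := by
  unfold transCount
  rw [zip_tail_append hz, List.countP_append]
  simp [List.countP_cons]

lemma balance {z : List V} {i : V} (hz : z.getLast? = some i) :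
    transTo z i + (if z.head? = some i then 1 else 0) = transFrom z i + 1 := by
  induction z with
  | nil => simp at hz
  | cons a t ih =>
    cases t with
    | nil =>
      simp only [List.getLast?_singleton, Option.some.injEq] at hz
      subst hz
      simp [transTo, transFrom]
    | cons b t' =>
      have h' : (b :: t').getLast? = some i := by
        rwa [List.getLast?_cons_cons] at hz
      have key := ih h'
      unfold transTo transFrom at key ⊢
      rw [zip_tail_cons_cons]
      simp only [List.countP_cons, List.head?_cons, Option.some.injEq] at key ⊢
      by_cases hbi : b = i <;> by_cases hai : a = i <;> simp [hbi, hai] at key ⊢ <;> omega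

lemma countP_fst_eq_sum (l : List (V × V)) (a : V) :
    l.countP (fun q => decide (q.1 = a)) = ∑ j : V, l.countP (fun q => decide (q = (a, j))) := by
  induction l with
  | nil => simp
  | cons p l ih =>
    simp only [List.countP_cons, Finset.sum_add_distrib, ih]
    congr 1
    by_cases h : p.1 = a
    · simp [Prod.ext_iff, h, Finset.sum_ite_eq]
    · simp [Prod.ext_iff, h]

lemma transFrom_eq_sum (z : List V) (a : V) :
    transFrom z a = ∑ j : V, transCount z a j :=
  countP_fst_eq_sum _ a

/-! ### The explicit formula -/

/-- Per-edge contribution to the numerator of the law, as a function of the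
transition count matrix. -/
noncomputable def edgeF (α : Sym2 V → ℝ) (T : V → V → ℕ) (a b : V) : ℝ :=
  if a = b then ∏ k ∈ Finset.range (T a a), (α s(a, a) + 2 * (k : ℝ))
  else ∏ k ∈ Finset.range (T a b + T b a), (α s(a, b) + (k : ℝ))

lemma edgeF_symm (α : Sym2 V → ℝ) (T : V → V → ℕ) :
    ∀ a b, edgeF α T a b = edgeF α T b a := by
  intro a b
  unfold edgeF
  by_cases h : a = b
  · subst h; rfl
  · rw [if_neg h, if_neg (Ne.symm h), add_comm (T a b), Sym2.eq_swap]

noncomputable def numProd (α : Sym2 V → ℝ) (T : V → V → ℕ) : ℝ :=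
  ∏ e : Sym2 V, Sym2.lift ⟨edgeF α T, edgeF_symm α T⟩ e

noncomputable def denProd (E : Set (Sym2 V)) (α : Sym2 V → ℝ) (x0 : V) (T : V → V → ℕ) : ℝ :=
  ∏ a : V, ∏ m ∈ Finset.range (∑ j : V, T a j),
    ((∑ m' : V, if s(a, m') ∈ E then α s(a, m') else 0) + 2 * (m : ℝ) + 1 -
      (if x0 = a then 1 else 0))

noncomputable def lawFormula (E : Set (Sym2 V)) (α : Sym2 V → ℝ) (x0 : V) (T : V → V → ℕ) : ℝ :=
  if ∀ i j, 0 < T i j → s(i, j) ∈ E then numProd α T / denProd E α x0 T else 0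

lemma errwStep_eq {E : Set (Sym2 V)} {α : Sym2 V → ℝ} {z : List V} {i : V}
    (hz : z.getLast? = some i) (y : V) :
    errwStep E α z y =
      if s(i, y) ∈ E then
        (α s(i, y) + (transCount z i y : ℝ) + (transCount z y i : ℝ)) /
          ((∑ m : V, if s(i, m) ∈ E then α s(i, m) else 0) +
            (transFrom z i : ℝ) + (transTo z i : ℝ))
      else 0 := by
  unfold errwStep
  rw [hz]

/-! ### Step lemmas -/

lemma numProd_step {z : List V} {i : V} (hz : z.getLast? = some i) (y : V) (α : Sym2 V → ℝ) :
    numProd α (transCount (z ++ [y])) =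
      numProd α (transCount z) *
        (α s(i, y) + (transCount z i y : ℝ) + (transCount z y i : ℝ)) := by
  set T := transCount z with hT
  set c : ℝ := α s(i, y) + (T i y : ℝ) + (T y i : ℝ) with hc
  have main : edgeF α (transCount (z ++ [y])) i y = edgeF α T i y * c := by
    by_cases hiy : i = y
    · subst hiy
      unfold edgeF
      rw [if_pos rfl, if_pos rfl,
        show transCount (z ++ [i]) i i = T i i + 1 by rw [transCount_append hz]; simp; rfl,
        Finset.prod_range_succ]
      rw [hc]; ring
    · unfold edgeF
      rw [if_neg hiy, if_neg hiy,
        show transCount (z ++ [y]) i y = T i y + 1 by rw [transCount_append hz]; simp; rfl,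
        show transCount (z ++ [y]) y i = T y i by
          rw [transCount_append hz]; simp [Prod.ext_iff]; rw [if_neg (fun h => hiy h.1)]; rfl,
        show T i y + 1 + T y i = (T i y + T y i) + 1 by omega,
        Finset.prod_range_succ]
      rw [hc]; push_cast; ring
  have hpt : ∀ e : Sym2 V,
      Sym2.lift ⟨edgeF α (transCount (z ++ [y])), edgeF_symm _ _⟩ e =
        Sym2.lift ⟨edgeF α T, edgeF_symm _ _⟩ e * (if e = s(i, y) then c else 1) := by
    intro e
    induction e using Sym2.ind with
    | _ a b =>
      rw [Sym2.lift_mk, Sym2.lift_mk]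
      show edgeF α (transCount (z ++ [y])) a b =
        edgeF α T a b * (if s(a, b) = s(i, y) then c else 1)
      by_cases h : s(a, b) = s(i, y)
      · rw [if_pos h]
        rcases Sym2.eq_iff.mp h with ⟨h1, h2⟩ | ⟨h1, h2⟩
        · rw [h1, h2]; exact main
        · rw [h1, h2, edgeF_symm α (transCount (z ++ [y])) y i, edgeF_symm α T y i]
          exact main
      · rw [if_neg h, mul_one]
        have hne1 : (i, y) ≠ (a, b) := by
          intro hp
          rw [Prod.mk.injEq] at hp
          exact h (by rw [← hp.1, ← hp.2])
        have hne2 : (i, y) ≠ (b, a) := by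
          intro hp
          rw [Prod.mk.injEq] at hp
          exact h (by rw [← hp.2, ← hp.1]; exact Sym2.eq_swap)
        have e1 : transCount (z ++ [y]) a b = T a b := by
          rw [transCount_append hz, if_neg hne1, add_zero]
        have e2 : transCount (z ++ [y]) b a = T b a := by
          rw [transCount_append hz, if_neg hne2, add_zero]
        by_cases hab : a = b
        · subst hab; unfold edgeF; rw [if_pos rfl, if_pos rfl, e1]
        · unfold edgeF; rw [if_neg hab, if_neg hab, e1, e2]
  unfold numProd
  calc (∏ e : Sym2 V, Sym2.lift ⟨edgeF α (transCount (z ++ [y])), edgeF_symm _ _⟩ e)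
      = ∏ e : Sym2 V, (Sym2.lift ⟨edgeF α T, edgeF_symm _ _⟩ e * (if e = s(i, y) then c else 1)) := by
        exact Finset.prod_congr rfl fun e _ => hpt e
    _ = (∏ e : Sym2 V, Sym2.lift ⟨edgeF α T, edgeF_symm _ _⟩ e) *
          (∏ e : Sym2 V, (if e = s(i, y) then c else 1)) := Finset.prod_mul_distrib
    _ = (∏ e : Sym2 V, Sym2.lift ⟨edgeF α T, edgeF_symm _ _⟩ e) * c := by
        rw [Finset.prod_ite_eq' Finset.univ s(i, y) (fun _ => c), if_pos (Finset.mem_univ _)]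

lemma denProd_step {z : List V} {i x0 : V} (hz : z.getLast? = some i)
    (hh : z.head? = some x0) (E : Set (Sym2 V)) (α : Sym2 V → ℝ) (y : V) :
    denProd E α x0 (transCount (z ++ [y])) =
      denProd E α x0 (transCount z) *
        ((∑ m' : V, if s(i, m') ∈ E then α s(i, m') else 0) +
          (transFrom z i : ℝ) + (transTo z i : ℝ)) := by
  set T := transCount z with hT
  have hrow : ∀ a : V, (∑ j : V, transCount (z ++ [y]) a j) =
      (∑ j : V, T a j) + (if a = i then 1 else 0) := by
    intro a
    simp only [transCount_append hz, Finset.sum_add_distrib]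
    congr 1
    by_cases h : a = i
    · subst h; simp [Prod.ext_iff, Finset.sum_ite_eq]
    · rw [Finset.sum_eq_zero, if_neg h]
      intro j _
      rw [if_neg]
      intro hp; rw [Prod.mk.injEq] at hp; exact h hp.1.symm
  set D : V → ℝ := fun a => ∑ m' : V, if s(a, m') ∈ E then α s(a, m') else 0 with hD
  set g : V → ℕ → ℝ := fun a m => D a + 2 * (m : ℝ) + 1 - (if x0 = a then 1 else 0) with hg
  have hfac : (transTo z i : ℝ) = (transFrom z i : ℝ) + 1 - (if x0 = i then 1 else 0) := by
    have hb := balance hz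
    rw [hh] at hb
    simp only [Option.some.injEq] at hb
    by_cases h : x0 = i
    · rw [if_pos h] at hb ⊢
      have he : transTo z i = transFrom z i := by omega
      rw [he]; ring
    · rw [if_neg h] at hb ⊢
      have he : transTo z i = transFrom z i + 1 := by omega
      rw [he]; push_cast; ring
  unfold denProd
  calc (∏ a : V, ∏ m ∈ Finset.range (∑ j : V, transCount (z ++ [y]) a j), g a m)
      = ∏ a : V, ((∏ m ∈ Finset.range (∑ j : V, T a j), g a m) *
          (if a = i then g i (∑ j : V, T i j) else 1)) := by
        refine Finset.prod_congr rfl fun a _ => ?_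
        rw [hrow a]
        by_cases h : a = i
        · rw [if_pos h, h, if_pos rfl, Finset.prod_range_succ]
        · rw [if_neg h, if_neg h, add_zero, mul_one]
    _ = (∏ a : V, ∏ m ∈ Finset.range (∑ j : V, T a j), g a m) *
          (∏ a : V, (if a = i then g i (∑ j : V, T i j) else 1)) := Finset.prod_mul_distrib
    _ = (∏ a : V, ∏ m ∈ Finset.range (∑ j : V, T a j), g a m) * g i (∑ j : V, T i j) := by
        rw [Finset.prod_ite_eq' Finset.univ i (fun _ => g i (∑ j : V, T i j)),
          if_pos (Finset.mem_univ _)]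
    _ = _ := by
        congr 1
        rw [hg]
        simp only
        rw [show ((∑ j : V, T i j : ℕ) : ℝ) = (transFrom z i : ℝ) by
          rw [transFrom_eq_sum]]
        rw [hfac, hD]
        ring

lemma lawFormula_step {z : List V} {i x0 : V} (hz : z.getLast? = some i)
    (hh : z.head? = some x0) (E : Set (Sym2 V)) (α : Sym2 V → ℝ) (y : V) :
    lawFormula E α x0 (transCount (z ++ [y])) =
      lawFormula E α x0 (transCount z) * errwStep E α z y := by
  rw [errwStep_eq hz]
  by_cases hE : s(i, y) ∈ E
  · rw [if_pos hE]
    by_cases hcond : ∀ a b, 0 < transCount z a b → s(a, b) ∈ E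
    · have hcond' : ∀ a b, 0 < transCount (z ++ [y]) a b → s(a, b) ∈ E := by
        intro a b hpos
        rw [transCount_append hz] at hpos
        by_cases hp : (i, y) = (a, b)
        · rw [Prod.mk.injEq] at hp
          rw [← hp.1, ← hp.2]; exact hE
        · rw [if_neg hp, add_zero] at hpos
          exact hcond a b hpos
      rw [lawFormula, lawFormula, if_pos hcond', if_pos hcond,
        numProd_step hz y α, denProd_step hz hh E α y, div_mul_div_comm]
    · have hcond' : ¬ ∀ a b, 0 < transCount (z ++ [y]) a b → s(a, b) ∈ E := by
        intro hfor
        refine hcond fun a b hpos => hfor a b ?_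
        rw [transCount_append hz]
        omega
      rw [lawFormula, lawFormula, if_neg hcond', if_neg hcond, zero_mul]
  · rw [if_neg hE, mul_zero]
    have hcond' : ¬ ∀ a b, 0 < transCount (z ++ [y]) a b → s(a, b) ∈ E := by
      intro hfor
      refine hE (hfor i y ?_)
      rw [transCount_append hz]
      simp
    rw [lawFormula, if_neg hcond']

lemma lawFormula_nil (E : Set (Sym2 V)) (α : Sym2 V → ℝ) (x0 : V) :
    lawFormula E α x0 (transCount [x0]) = 1 := by
  have h0 : ∀ a b : V, transCount [x0] a b = 0 := by
    intro a b; simp [transCount]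
  rw [lawFormula, if_pos (fun a b h => absurd h (by rw [h0]; omega))]
  have hn : numProd α (transCount [x0]) = 1 := by
    unfold numProd
    refine Finset.prod_eq_one fun e _ => ?_
    induction e using Sym2.ind with
    | _ a b =>
      rw [Sym2.lift_mk]
      show edgeF α (transCount [x0]) a b = 1
      unfold edgeF
      by_cases h : a = b <;> simp [h, h0]
  have hd : denProd E α x0 (transCount [x0]) = 1 := by
    unfold denProd
    refine Finset.prod_eq_one fun a _ => ?_
    simp [h0]
  rw [hn, hd, div_one]

lemma lawFrom_append (step : List V → V → ℝ) :
    ∀ (x z : List V) (y : V),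
      lawFrom step z (x ++ [y]) = lawFrom step z x * step (z ++ x) y := by
  intro x
  induction x with
  | nil => intro z y; simp [lawFrom]
  | cons a x ih =>
    intro z y
    simp only [List.cons_append, lawFrom, List.append_eq]
    rw [ih (z ++ [a]) y, show (z ++ [a]) ++ x = z ++ (a :: x) by simp]
    ring

lemma errwLaw_eq_formula (E : Set (Sym2 V)) (α : Sym2 V → ℝ) (x0 : V) (x : List V) :
    errwLaw E α x0 x = lawFormula E α x0 (transCount (x0 :: x)) := by
  unfold errwLaw
  induction x using List.reverseRecOn with
  | nil => rw [lawFormula_nil]; rfl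
  | append_singleton x y ih =>
    rw [lawFrom_append, ih]
    obtain ⟨i, hi⟩ := Option.isSome_iff_exists.mp
      (List.getLast?_isSome.mpr (List.cons_ne_nil x0 x))
    rw [show x0 :: (x ++ [y]) = (x0 :: x) ++ [y] from rfl,
      lawFormula_step hi (by simp) E α y]
    rfl

theorem errw_markovExchangeable
    (E : Set (Sym2 V)) (α : Sym2 V → ℝ) (hα : ∀ e ∈ E, 0 < α e) (x0 : V) :
    ∀ x x' : List V, StringEquiv (x0 :: x) (x0 :: x') →
      errwLaw E α x0 x = errwLaw E α x0 x' := by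
  intro x x' h
  rw [errwLaw_eq_formula, errwLaw_eq_formula]
  have hT : transCount (x0 :: x) = transCount (x0 :: x') :=
    funext fun i => funext fun j => h.2 i j
  rw [hT]
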